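/- The squared norm of the improper-proper kernel satisfies ∫₀^∞ Σ_{k=0}^{ν−1} ‖h_ip(t,k)‖₂² dt = trace(P_i·M·P_p·M), where h_ip(t,k) := vec(B^T·F_N(k)^T·M·F_J(t)·B) and ‖·‖₂ is the Euclidean norm on ℝ^{m²}. -/

import Mathlib

open MeasureTheory Matrix

/-- The matrix exponential of a real square matrix. -/
noncomputable def mexp {d : ℕ} (X : Matrix (Fin d) (Fin d) ℝ) : Matrix (Fin d) (Fin d) ℝ :=
  NormedSpace.exp X

/-- The operator norm on real matrices, induced by the Euclidean (`ℓ²`) norms. -/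
noncomputable def opNorm {d e : ℕ} (X : Matrix (Fin d) (Fin e) ℝ) : ℝ :=
  letI := Matrix.instL2OpNormedAddCommGroup (m := Fin d) (n := Fin e) (𝕜 := ℝ)
  ‖X‖

/-- Entrywise integral over `(0, ∞)` of a matrix-valued function. -/
noncomputable def matIntIoi {a b : Type*} (F : ℝ → Matrix a b ℝ) : Matrix a b ℝ :=
  Matrix.of fun i j => ∫ t in Set.Ioi (0:ℝ), F t i j

/-- Entrywise integrability over `(0, ∞)` of a matrix-valued function. -/
def MatIntegrableIoi {a b : Type*} (F : ℝ → Matrix a b ℝ) : Prop :=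
  ∀ i j, MeasureTheory.IntegrableOn (fun t => F t i j) (Set.Ioi 0)

/-- Kronecker product of two vectors in `ℝ^m`, an element of `ℝ^{m²}`. -/
def kron {m : ℕ} (a b : Fin m → ℝ) : Fin m × Fin m → ℝ := fun p => a p.1 * b p.2

/-- Vectorization of an `m × m` matrix as an element of `ℝ^{m²}`. -/
def vecm {m : ℕ} (X : Matrix (Fin m) (Fin m) ℝ) : Fin m × Fin m → ℝ := fun p => X p.1 p.2

/-- Squared Euclidean norm of a vector. -/
def enormSq {ι : Type*} [Fintype ι] (v : ι → ℝ) : ℝ := ∑ i, (v i) ^ 2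

/-- Euclidean inner product of two vectors. -/
def dotv {ι : Type*} [Fintype ι] (v w : ι → ℝ) : ℝ := ∑ i, v i * w i

lemma euc_coord_abs_le {d : ℕ} (y : EuclideanSpace ℝ (Fin d)) (i : Fin d) :
    |y i| ≤ ‖y‖ := by
  rw [EuclideanSpace.norm_eq]
  have h1 : |y i| ^ 2 ≤ ∑ j, ‖y j‖ ^ 2 := by
    have := Finset.single_le_sum (f := fun j => ‖y j‖ ^ 2)
      (fun j _ => sq_nonneg _) (Finset.mem_univ i)
    simpa [Real.norm_eq_abs] using this
  calc |y i| = Real.sqrt (|y i| ^ 2) := by rw [Real.sqrt_sq (abs_nonneg _)]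
    _ ≤ _ := Real.sqrt_le_sqrt h1

lemma entry_abs_le_opNorm {d e : ℕ} (X : Matrix (Fin d) (Fin e) ℝ) (i : Fin d) (j : Fin e) :
    |X i j| ≤ opNorm X := by
  letI := Matrix.instL2OpNormedAddCommGroup (m := Fin d) (n := Fin e) (𝕜 := ℝ)
  have h := Matrix.l2_opNorm_mulVec X (EuclideanSpace.single j (1 : ℝ))
  rw [EuclideanSpace.norm_single, norm_one, mul_one] at h
  have hv : ((EuclideanSpace.equiv (Fin d) ℝ).symm
      (X *ᵥ (EuclideanSpace.single j (1:ℝ)))) i = X i j := by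
    simp [Matrix.mulVec, dotProduct, EuclideanSpace.single_apply]
  have h2 := euc_coord_abs_le ((EuclideanSpace.equiv (Fin d) ℝ).symm
      (X *ᵥ (EuclideanSpace.single j (1:ℝ)))) i
  rw [hv] at h2
  exact h2.trans h

lemma mexp_entry_continuous {d : ℕ} (J : Matrix (Fin d) (Fin d) ℝ) (i j : Fin d) :
    Continuous fun t : ℝ => mexp (t • J) i j := by
  letI : NormedRing (Matrix (Fin d) (Fin d) ℝ) := Matrix.linftyOpNormedRing
  letI : NormedAlgebra ℝ (Matrix (Fin d) (Fin d) ℝ) := Matrix.linftyOpNormedAlgebra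
  haveI : CompleteSpace (Matrix (Fin d) (Fin d) ℝ) := FiniteDimensional.complete ℝ _
  letI : NormedAlgebra ℚ (Matrix (Fin d) (Fin d) ℝ) := NormedAlgebra.restrictScalars ℚ ℝ _
  have h1 : Continuous fun t : ℝ => NormedSpace.exp (t • J) :=
    NormedSpace.exp_continuous.comp (continuous_id.smul continuous_const)
  exact ((continuous_apply j).comp (continuous_apply i)).comp h1

/-- `∫₀^∞ ∑_{k<ν} ‖h_ip(t,k)‖₂² dt = trace(P_i·M·P_p·M)`. -/
theorem improper_proper_kernel_norm_eq_trace
    {nf ni m : ℕ} (hm : 0 < m) (ν : ℕ) (hν : 0 < ν)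
    -- Weierstraß canonical form data for the full-order system
    (W T Winv Tinv : Matrix (Fin nf ⊕ Fin ni) (Fin nf ⊕ Fin ni) ℝ)
    (hW : W * Winv = 1) (hW' : Winv * W = 1)
    (hT : T * Tinv = 1) (hT' : Tinv * T = 1)
    (J : Matrix (Fin nf) (Fin nf) ℝ) (N : Matrix (Fin ni) (Fin ni) ℝ) (hN : N ^ ν = 0)
    (C α : ℝ) (hC : 0 < C) (hα : 0 < α)
    (hJ : ∀ t : ℝ, 0 ≤ t → opNorm (mexp (t • J)) ≤ C * Real.exp (-α * t))
    (E A : Matrix (Fin nf ⊕ Fin ni) (Fin nf ⊕ Fin ni) ℝ)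
    (hE : E = W * fromBlocks 1 0 0 N * T)
    (hA : A = W * fromBlocks J 0 0 1 * T)
    (B : Matrix (Fin nf ⊕ Fin ni) (Fin m) ℝ)
    (M : Matrix (Fin nf ⊕ Fin ni) (Fin nf ⊕ Fin ni) ℝ) (hM : M.IsSymm)
    -- spectral projectors
    (Pr Pl : Matrix (Fin nf ⊕ Fin ni) (Fin nf ⊕ Fin ni) ℝ)
    (hPr : Pr = Tinv * fromBlocks 1 0 0 0 * T)
    (hPl : Pl = W * fromBlocks 1 0 0 0 * Winv)
    -- fundamental solution matrices
    (FJ : ℝ → Matrix (Fin nf ⊕ Fin ni) (Fin nf ⊕ Fin ni) ℝ)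
    (hFJ : ∀ t : ℝ, FJ t = Tinv * fromBlocks (mexp (t • J)) 0 0 0 * Winv)
    (FN : ℕ → Matrix (Fin nf ⊕ Fin ni) (Fin nf ⊕ Fin ni) ℝ)
    (hFN : ∀ k : ℕ, FN k = Tinv * fromBlocks 0 0 0 (-(N ^ k)) * Winv)
    -- proper and improper controllability Gramians
    (Pp : Matrix (Fin nf ⊕ Fin ni) (Fin nf ⊕ Fin ni) ℝ)
    (hPp : Pp = matIntIoi fun t => FJ t * B * Bᵀ * (FJ t)ᵀ)
    (Pimp : Matrix (Fin nf ⊕ Fin ni) (Fin nf ⊕ Fin ni) ℝ)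
    (hPimp : Pimp = ∑ k ∈ Finset.range ν, FN k * B * Bᵀ * (FN k)ᵀ)
    -- the improper-proper kernel
    (hip : ℝ → ℕ → Fin m × Fin m → ℝ)
    (hhip : ∀ (t : ℝ) (k : ℕ), hip t k = vecm (Bᵀ * (FN k)ᵀ * M * FJ t * B)) :
    (∫ t in Set.Ioi (0:ℝ), ∑ k ∈ Finset.range ν, enormSq (hip t k)) =
      Matrix.trace (Pimp * M * Pp * M) := by
  classical
  have hMt : Mᵀ = M := hM
  set g : ℝ → Matrix (Fin nf) (Fin nf) ℝ := fun t => mexp (t • J) with hgdef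
  set Eb : ℝ → Matrix (Fin nf ⊕ Fin ni) (Fin nf ⊕ Fin ni) ℝ :=
    (fun t => fromBlocks (g t) 0 0 0) with hEbdef
  set D : Matrix (Fin nf ⊕ Fin ni) (Fin m) ℝ := Winv * B with hDdef
  set Φ : ℝ → Matrix (Fin nf ⊕ Fin ni) (Fin m) ℝ := fun t => Tinv * Eb t * D with hΦdef
  have hΦ : ∀ t, FJ t * B = Φ t := by
    intro t
    rw [hFJ, hΦdef, hEbdef, hDdef, hgdef]
    simp [Matrix.mul_assoc]
  set Xe : ℝ → Matrix (Fin nf ⊕ Fin ni) (Fin nf ⊕ Fin ni) ℝ := fun t => Φ t * (Φ t)ᵀ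
    with hXedef
  have hXe : ∀ t, FJ t * B * Bᵀ * (FJ t)ᵀ = Xe t := by
    intro t
    have h1 : FJ t * B * Bᵀ * (FJ t)ᵀ = (FJ t * B) * (FJ t * B)ᵀ := by
      simp [Matrix.transpose_mul, Matrix.mul_assoc]
    rw [h1, hΦ, hXedef]
  -- continuity
  have hg_cont : ∀ i j, Continuous fun t => g t i j := fun i j => mexp_entry_continuous J i j
  have hEb_cont : ∀ u v, Continuous fun t => Eb t u v := by
    rintro (i | i) (j | j)
    · simpa [hEbdef] using hg_cont i j
    all_goals simp [hEbdef]
    all_goals exact continuous_const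
  have hΦ_apply : ∀ t p a, Φ t p a = ∑ v, (∑ u, Tinv p u * Eb t u v) * D v a := by
    intro t p a
    simp [hΦdef, Matrix.mul_apply]
  have hΦ_cont : ∀ p a, Continuous fun t => Φ t p a := by
    intro p a
    have : (fun t => Φ t p a) = fun t => ∑ v, (∑ u, Tinv p u * Eb t u v) * D v a :=
      funext fun t => hΦ_apply t p a
    rw [this]
    exact continuous_finset_sum _ fun v _ =>
      (continuous_finset_sum _ fun u _ => continuous_const.mul (hEb_cont u v)).mul
        continuous_const
  -- bounds
  have hg_bd : ∀ t : ℝ, 0 ≤ t → ∀ i j, |g t i j| ≤ C * Real.exp (-α * t) := by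
    intro t ht i j
    exact (entry_abs_le_opNorm _ i j).trans (hJ t ht)
  have hEb_bd : ∀ t : ℝ, 0 ≤ t → ∀ u v, |Eb t u v| ≤ C * Real.exp (-α * t) := by
    intro t ht u v
    rcases u with i | i <;> rcases v with j | j
    · simpa [hEbdef] using hg_bd t ht i j
    all_goals simp [hEbdef]; positivity
  set K : (Fin nf ⊕ Fin ni) → Fin m → ℝ := fun p a => ∑ v, (∑ u, |Tinv p u|) * |D v a|
    with hKdef
  have hK_nonneg : ∀ p a, 0 ≤ K p a := fun p a =>
    Finset.sum_nonneg fun v _ =>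
      mul_nonneg (Finset.sum_nonneg fun u _ => abs_nonneg _) (abs_nonneg _)
  have hΦ_bd : ∀ t : ℝ, 0 ≤ t → ∀ p a, |Φ t p a| ≤ K p a * (C * Real.exp (-α * t)) := by
    intro t ht p a
    rw [hΦ_apply]
    calc |∑ v, (∑ u, Tinv p u * Eb t u v) * D v a|
        ≤ ∑ v, |(∑ u, Tinv p u * Eb t u v) * D v a| := Finset.abs_sum_le_sum_abs _ _
      _ ≤ ∑ v, ((∑ u, |Tinv p u|) * (C * Real.exp (-α * t))) * |D v a| := by
          refine Finset.sum_le_sum fun v _ => ?_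
          rw [abs_mul]
          refine mul_le_mul_of_nonneg_right ?_ (abs_nonneg _)
          calc |∑ u, Tinv p u * Eb t u v| ≤ ∑ u, |Tinv p u * Eb t u v| :=
                Finset.abs_sum_le_sum_abs _ _
            _ ≤ ∑ u, |Tinv p u| * (C * Real.exp (-α * t)) := by
                refine Finset.sum_le_sum fun u _ => ?_
                rw [abs_mul]
                exact mul_le_mul_of_nonneg_left (hEb_bd t ht u v) (abs_nonneg _)
            _ = (∑ u, |Tinv p u|) * (C * Real.exp (-α * t)) := by rw [Finset.sum_mul]
      _ = K p a * (C * Real.exp (-α * t)) := by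
          simp only [hKdef, Finset.sum_mul]
          exact Finset.sum_congr rfl fun v _ => Finset.sum_congr rfl fun u _ => by ring
  have hXe_apply : ∀ t p q, Xe t p q = ∑ a, Φ t p a * Φ t q a := by
    intro t p q
    simp [hXedef, Matrix.mul_apply, Matrix.transpose_apply]
  have hXe_cont : ∀ p q, Continuous fun t => Xe t p q := by
    intro p q
    have : (fun t => Xe t p q) = fun t => ∑ a, Φ t p a * Φ t q a :=
      funext fun t => hXe_apply t p q
    rw [this]
    exact continuous_finset_sum _ fun a _ => (hΦ_cont p a).mul (hΦ_cont q a)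
  have hXe_bd : ∀ t : ℝ, 0 ≤ t → ∀ p q,
      |Xe t p q| ≤ (∑ a, K p a * K q a) * (C ^ 2 * Real.exp (-(2 * α) * t)) := by
    intro t ht p q
    rw [hXe_apply]
    have he : Real.exp (-α * t) * Real.exp (-α * t) = Real.exp (-(2 * α) * t) := by
      rw [← Real.exp_add]; congr 1; ring
    calc |∑ a, Φ t p a * Φ t q a| ≤ ∑ a, |Φ t p a * Φ t q a| :=
          Finset.abs_sum_le_sum_abs _ _
      _ ≤ ∑ a, (K p a * (C * Real.exp (-α * t))) * (K q a * (C * Real.exp (-α * t))) := by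
          refine Finset.sum_le_sum fun a _ => ?_
          rw [abs_mul]
          exact mul_le_mul (hΦ_bd t ht p a) (hΦ_bd t ht q a) (abs_nonneg _)
            (mul_nonneg (hK_nonneg p a) (by positivity))
      _ = (∑ a, K p a * K q a) * (C ^ 2 * Real.exp (-(2 * α) * t)) := by
          rw [Finset.sum_mul]
          refine Finset.sum_congr rfl fun a _ => ?_
          rw [← he]; ring
  have hInt : ∀ p q, IntegrableOn (fun t => Xe t p q) (Set.Ioi (0:ℝ)) := by
    intro p q
    have hbase : IntegrableOn
        (fun t => (∑ a, K p a * K q a) * (C ^ 2 * Real.exp (-(2 * α) * t)))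
        (Set.Ioi (0:ℝ)) := by
      have h0 : (0:ℝ) < 2 * α := by positivity
      exact ((exp_neg_integrableOn_Ioi 0 h0).const_mul _).const_mul _
    refine Integrable.mono' hbase ((hXe_cont p q).aestronglyMeasurable) ?_
    filter_upwards [self_mem_ae_restrict measurableSet_Ioi] with t ht
    rw [Real.norm_eq_abs]
    exact hXe_bd t (le_of_lt ht) p q
  -- trace expansion
  have trace_expand : ∀ X : Matrix (Fin nf ⊕ Fin ni) (Fin nf ⊕ Fin ni) ℝ,
      Matrix.trace (Pimp * M * X * M) = ∑ q, ∑ p, (M * Pimp * M) q p * X p q := by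
    intro X
    rw [Matrix.trace_mul_comm]
    rw [show M * (Pimp * M * X) = (M * Pimp * M) * X by simp [Matrix.mul_assoc]]
    simp [Matrix.trace, Matrix.diag, Matrix.mul_apply]
  -- squared norm equals trace
  have norm_eq_trace : ∀ G : Matrix (Fin m) (Fin m) ℝ,
      enormSq (vecm G) = Matrix.trace (G * Gᵀ) := by
    intro G
    simp [enormSq, vecm, Matrix.trace, Matrix.diag, Matrix.mul_apply,
      Matrix.transpose_apply, pow_two, Fintype.sum_prod_type]
  have key_k : ∀ (t : ℝ) (k : ℕ), enormSq (hip t k) =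
      Matrix.trace ((FN k * B * Bᵀ * (FN k)ᵀ) *
        (M * (FJ t * B * Bᵀ * (FJ t)ᵀ) * M)) := by
    intro t k
    rw [hhip, norm_eq_trace]
    have hG : Bᵀ * (FN k)ᵀ * M * FJ t * B = (FN k * B)ᵀ * (M * (FJ t * B)) := by
      simp [Matrix.transpose_mul, Matrix.mul_assoc]
    rw [hG]
    have hGT : ((FN k * B)ᵀ * (M * (FJ t * B)))ᵀ =
        (M * (FJ t * B))ᵀ * (FN k * B) := by
      simp [Matrix.transpose_mul, Matrix.transpose_transpose]
    rw [hGT]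
    have h1 : (FN k * B)ᵀ * (M * (FJ t * B)) * ((M * (FJ t * B))ᵀ * (FN k * B)) =
        (FN k * B)ᵀ * (M * (FJ t * B) * (M * (FJ t * B))ᵀ * (FN k * B)) := by
      simp [Matrix.mul_assoc]
    rw [h1, Matrix.trace_mul_comm]
    have h2 : M * (FJ t * B) * (M * (FJ t * B))ᵀ * (FN k * B) * (FN k * B)ᵀ =
        (M * (FJ t * B) * (M * (FJ t * B))ᵀ) * ((FN k * B) * (FN k * B)ᵀ) := by
      simp [Matrix.mul_assoc]
    rw [h2, Matrix.trace_mul_comm]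
    congr 1
    simp [Matrix.transpose_mul, Matrix.transpose_transpose, Matrix.mul_assoc, hMt]
  have key : ∀ t : ℝ, (∑ k ∈ Finset.range ν, enormSq (hip t k)) =
      ∑ q, ∑ p, (M * Pimp * M) q p * Xe t p q := by
    intro t
    calc ∑ k ∈ Finset.range ν, enormSq (hip t k)
        = ∑ k ∈ Finset.range ν, Matrix.trace ((FN k * B * Bᵀ * (FN k)ᵀ) *
            (M * (FJ t * B * Bᵀ * (FJ t)ᵀ) * M)) :=
          Finset.sum_congr rfl fun k _ => key_k t k
      _ = Matrix.trace (Pimp * (M * (FJ t * B * Bᵀ * (FJ t)ᵀ) * M)) := by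
          rw [hPimp, Finset.sum_mul, Matrix.trace_sum]
      _ = Matrix.trace (Pimp * M * (FJ t * B * Bᵀ * (FJ t)ᵀ) * M) := by
          rw [show Pimp * M * (FJ t * B * Bᵀ * (FJ t)ᵀ) * M =
            Pimp * (M * (FJ t * B * Bᵀ * (FJ t)ᵀ) * M) by simp [Matrix.mul_assoc]]
      _ = ∑ q, ∑ p, (M * Pimp * M) q p * (FJ t * B * Bᵀ * (FJ t)ᵀ) p q :=
          trace_expand _
      _ = ∑ q, ∑ p, (M * Pimp * M) q p * Xe t p q := by rw [hXe t]
  have hPp_entry : ∀ p q, Pp p q = ∫ t in Set.Ioi (0:ℝ), Xe t p q := by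
    intro p q
    rw [hPp]
    show (∫ t in Set.Ioi (0:ℝ), (FJ t * B * Bᵀ * (FJ t)ᵀ) p q) = _
    refine integral_congr_ae (Filter.Eventually.of_forall fun t => ?_)
    show (FJ t * B * Bᵀ * (FJ t)ᵀ) p q = Xe t p q
    rw [hXe t]
  calc (∫ t in Set.Ioi (0:ℝ), ∑ k ∈ Finset.range ν, enormSq (hip t k))
      = ∫ t in Set.Ioi (0:ℝ), ∑ q, ∑ p, (M * Pimp * M) q p * Xe t p q := by
        refine integral_congr_ae (Filter.Eventually.of_forall fun t => ?_)
        exact key t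
    _ = ∑ q, ∑ p, ∫ t in Set.Ioi (0:ℝ), (M * Pimp * M) q p * Xe t p q := by
        rw [MeasureTheory.integral_finset_sum]
        · exact Finset.sum_congr rfl fun q _ =>
            MeasureTheory.integral_finset_sum _ fun p _ => (hInt p q).const_mul _
        · intro q _
          exact integrable_finset_sum _ fun p _ => (hInt p q).const_mul _
    _ = ∑ q, ∑ p, (M * Pimp * M) q p * Pp p q := by
        refine Finset.sum_congr rfl fun q _ => Finset.sum_congr rfl fun p _ => ?_
        rw [MeasureTheory.integral_const_mul, hPp_entry]
    _ = Matrix.trace (Pimp * M * Pp * M) := (trace_expand Pp).symm
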